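/- Every chordal graph is either a complete graph or contains two non-adjacent simplicial vertices. -/

import Mathlib

open SimpleGraph

variable {V : Type*}

/-- The bull: a triangle 0,1,2 with pendant vertices 3 (adjacent to 0) and 4 (adjacent to 1). -/
def bullGraph : SimpleGraph (Fin 5) :=
  SimpleGraph.fromRel (fun i j =>
    (i = 0 ∧ j = 1) ∨ (i = 0 ∧ j = 2) ∨ (i = 1 ∧ j = 2) ∨ (i = 0 ∧ j = 3) ∨ (i = 1 ∧ j = 4))

/-- The graph consisting of two independent edges: 0-1 and 2-3. -/
def twoK2 : SimpleGraph (Fin 4) :=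
  SimpleGraph.fromRel (fun i j => (i = 0 ∧ j = 1) ∨ (i = 2 ∧ j = 3))

/-- `G` has no induced subgraph isomorphic to `H`. -/
def IndFree {W : Type*} (H : SimpleGraph W) (G : SimpleGraph V) : Prop :=
  IsEmpty (H ↪g G)

/-- A graph is chordal if it has no induced cycle of length at least 4. -/
def Chordal (G : SimpleGraph V) : Prop :=
  ∀ n : ℕ, 4 ≤ n → IndFree (cycleGraph n) G

/-- A cap on a hole of length `n`: a cycle on `ZMod n` together with an extra vertex
adjacent to exactly the two adjacent hole vertices `0` and `1`. -/
def capGraph (n : ℕ) : SimpleGraph (Option (ZMod n)) :=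
  SimpleGraph.fromRel (fun a b =>
    match a, b with
    | some i, some j => j = i + 1
    | none, some i => i = 0 ∨ i = 1
    | _, _ => False)

/-- `x` dominates `y`: they are adjacent and every neighbour of `y` other than `x`
is a neighbour of `x`. -/
def Dominates (G : SimpleGraph V) (x y : V) : Prop :=
  G.Adj x y ∧ ∀ z, G.Adj y z → z ≠ x → G.Adj x z

/-- A graph is reducible if some vertex dominates an adjacent vertex. -/
def Reducible (G : SimpleGraph V) : Prop :=
  ∃ x y, Dominates G x y

/-- Two adjacent vertices with the same neighbours other than each other. -/
def TrueTwins (G : SimpleGraph V) (x y : V) : Prop :=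
  G.Adj x y ∧ ∀ z, z ≠ x → z ≠ y → (G.Adj x z ↔ G.Adj y z)

/-- A vertex is simplicial if its neighbourhood induces a clique. -/
def Simplicial (G : SimpleGraph V) (v : V) : Prop :=
  G.IsClique (G.neighborSet v)

/-- A universal vertex is adjacent to all other vertices. -/
def Universal (G : SimpleGraph V) (v : V) : Prop :=
  ∀ w, w ≠ v → G.Adj v w

/-- A graph is biconnected if it is connected and remains connected after
deleting any single vertex. -/
def Biconnected (G : SimpleGraph V) : Prop :=
  G.Connected ∧ ∀ v : V, (G.induce ({v}ᶜ : Set V)).Connected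

/-- A basic (cap-free) graph: a chordal graph, or a biconnected triangle-free graph
together with at most one additional vertex adjacent to all other vertices. -/
def IsBasic (G : SimpleGraph V) : Prop :=
  Chordal G ∨ (Biconnected G ∧ G.CliqueFree 3) ∨
    (∃ v : V, Universal G v ∧ Biconnected (G.induce ({v}ᶜ : Set V)) ∧
      (G.induce ({v}ᶜ : Set V)).CliqueFree 3)

/-- A one-point cutset: a vertex whose removal disconnects the graph. -/
def IsCutVertex (G : SimpleGraph V) (v : V) : Prop :=
  ¬ (G.induce ({v}ᶜ : Set V)).Connected

/-- `C` is (the vertex set of) a connected component of `G - v`. -/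
def IsComponentOf (G : SimpleGraph V) (v : V) (C : Set V) : Prop :=
  v ∉ C ∧ C.Nonempty ∧ (G.induce C).Connected ∧
    ∀ x ∈ C, ∀ y, G.Adj x y → y ≠ v → y ∈ C

/-- An amalgam partition `(K, A1, B1, A2, B2)` of `G`. -/
structure IsAmalgamPartition (G : SimpleGraph V) (K A1 B1 A2 B2 : Set V) : Prop where
  partition : ∀ v : V, (v ∈ K ∧ v ∉ A1 ∧ v ∉ B1 ∧ v ∉ A2 ∧ v ∉ B2) ∨
    (v ∉ K ∧ v ∈ A1 ∧ v ∉ B1 ∧ v ∉ A2 ∧ v ∉ B2) ∨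
    (v ∉ K ∧ v ∉ A1 ∧ v ∈ B1 ∧ v ∉ A2 ∧ v ∉ B2) ∨
    (v ∉ K ∧ v ∉ A1 ∧ v ∉ B1 ∧ v ∈ A2 ∧ v ∉ B2) ∨
    (v ∉ K ∧ v ∉ A1 ∧ v ∉ B1 ∧ v ∉ A2 ∧ v ∈ B2)
  A1_nonempty : A1.Nonempty
  A2_nonempty : A2.Nonempty
  K_clique : G.IsClique K
  side1_big : 2 ≤ (A1 ∪ B1).ncard
  side2_big : 2 ≤ (A2 ∪ B2).ncard
  A1A2_complete : ∀ a1 ∈ A1, ∀ a2 ∈ A2, G.Adj a1 a2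
  KA1_complete : ∀ k ∈ K, ∀ a ∈ A1, G.Adj k a
  KA2_complete : ∀ k ∈ K, ∀ a ∈ A2, G.Adj k a
  B1_sep : ∀ b ∈ B1, ∀ x ∈ A2 ∪ B2, ¬ G.Adj b x
  B2_sep : ∀ b ∈ B2, ∀ x ∈ A1 ∪ B1, ¬ G.Adj b x

/-- A clique cover of `G`: a finite family of cliques covering all vertices. -/
def IsCliqueCover (G : SimpleGraph V) (𝒞 : Finset (Set V)) : Prop :=
  (∀ s ∈ 𝒞, G.IsClique s) ∧ ∀ v : V, ∃ s ∈ 𝒞, v ∈ s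

/-- The clique cover number `θ(G)`. -/
noncomputable def cliqueCoverNumber (G : SimpleGraph V) : ℕ :=
  sInf {n : ℕ | ∃ 𝒞 : Finset (Set V), IsCliqueCover G 𝒞 ∧ 𝒞.card = n}

/-- A matching of `G`: a finite set of edges, pairwise vertex-disjoint. -/
def IsMatching' (G : SimpleGraph V) (M : Finset (Sym2 V)) : Prop :=
  (↑M : Set (Sym2 V)) ⊆ G.edgeSet ∧
    ∀ e ∈ M, ∀ f ∈ M, e ≠ f → ∀ v : V, v ∈ e → v ∉ f

/-- The maximum size `m(G)` of a matching of `G`. -/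
noncomputable def matchingNumber (G : SimpleGraph V) : ℕ :=
  sSup {n : ℕ | ∃ M : Finset (Sym2 V), IsMatching' G M ∧ M.card = n}

/-- An asteroidal triple: a stable triple such that between any two of its vertices
there is a path avoiding the closed neighbourhood of the third. -/
def IsAT (G : SimpleGraph V) (x y z : V) : Prop :=
  x ≠ y ∧ y ≠ z ∧ x ≠ z ∧ ¬ G.Adj x y ∧ ¬ G.Adj y z ∧ ¬ G.Adj x z ∧
    (∃ p : G.Walk x y, ∀ w ∈ p.support, w ≠ z ∧ ¬ G.Adj z w) ∧
    (∃ p : G.Walk y z, ∀ w ∈ p.support, w ≠ x ∧ ¬ G.Adj x w) ∧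
    (∃ p : G.Walk x z, ∀ w ∈ p.support, w ≠ y ∧ ¬ G.Adj y w)

def ATFree (G : SimpleGraph V) : Prop := ¬ ∃ x y z : V, IsAT G x y z


section DiracAux
universe u


/-- Reachability by a chain of vertices avoiding a set `S`. -/
def AvoidReach (G : SimpleGraph V) (S : Set V) (a v : V) : Prop :=
  ∃ (ℓ : ℕ) (f : ℕ → V), f 0 = a ∧ f ℓ = v ∧ (∀ i, i < ℓ → G.Adj (f i) (f (i + 1))) ∧
    (∀ i, i ≤ ℓ → f i ∉ S)

lemma AvoidReach.not_mem {G : SimpleGraph V} {S : Set V} {a v : V}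
    (h : AvoidReach G S a v) : v ∉ S := by
  obtain ⟨ℓ, f, h0, hl, _, hav⟩ := h
  exact hl ▸ hav ℓ le_rfl

lemma avoidReach_refl {G : SimpleGraph V} {S : Set V} {a : V} (h : a ∉ S) :
    AvoidReach G S a a :=
  ⟨0, fun _ => a, rfl, rfl, fun i hi => by omega, fun _ _ => h⟩

lemma AvoidReach.symm {G : SimpleGraph V} {S : Set V} {a v : V}
    (h : AvoidReach G S a v) : AvoidReach G S v a := by
  obtain ⟨ℓ, f, h0, hl, hadj, hav⟩ := h
  refine ⟨ℓ, fun i => f (ℓ - i), by simp [hl], by simp [h0], ?_, fun i _ => hav _ (by omega)⟩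
  intro i hi
  show G.Adj (f (ℓ - i)) (f (ℓ - (i + 1)))
  have h1 : ℓ - i = (ℓ - (i + 1)) + 1 := by omega
  rw [h1]
  exact (hadj _ (by omega)).symm

lemma AvoidReach.trans {G : SimpleGraph V} {S : Set V} {a u v : V}
    (h1 : AvoidReach G S a u) (h2 : AvoidReach G S u v) : AvoidReach G S a v := by
  obtain ⟨ℓ₁, f₁, h10, h1l, h1adj, h1av⟩ := h1
  obtain ⟨ℓ₂, f₂, h20, h2l, h2adj, h2av⟩ := h2
  refine ⟨ℓ₁ + ℓ₂, fun i => if i < ℓ₁ then f₁ i else f₂ (i - ℓ₁), ?_, ?_, ?_, ?_⟩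
  · by_cases h : 0 < ℓ₁
    · simp [h, h10]
    · have : ℓ₁ = 0 := by omega
      simp [this, h20, ← h10, ← h1l, this]
  · have : ¬ (ℓ₁ + ℓ₂ < ℓ₁) := by omega
    simp [this, h2l]
  · intro i hi
    show G.Adj (if i < ℓ₁ then f₁ i else f₂ (i - ℓ₁)) (if i + 1 < ℓ₁ then f₁ (i + 1) else f₂ (i + 1 - ℓ₁))
    rcases lt_trichotomy (i + 1) ℓ₁ with h | h | h
    · rw [if_pos (show i < ℓ₁ by omega), if_pos h]
      exact h1adj i (by omega)
    · rw [if_pos (show i < ℓ₁ by omega), if_neg (show ¬ (i + 1 < ℓ₁) by omega)]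
      have e : f₂ (i + 1 - ℓ₁) = f₁ (i + 1) := by
        rw [show i + 1 - ℓ₁ = 0 by omega, h20, ← h1l, h]
      rw [e]
      exact h1adj i (by omega)
    · rw [if_neg (show ¬ (i < ℓ₁) by omega), if_neg (show ¬ (i + 1 < ℓ₁) by omega)]
      have e : i + 1 - ℓ₁ = (i - ℓ₁) + 1 := by omega
      rw [e]
      exact h2adj _ (by omega)
  · intro i hi
    by_cases h : i < ℓ₁
    · simpa [h] using h1av i (by omega)
    · simpa [h] using h2av (i - ℓ₁) (by omega)

lemma AvoidReach.step {G : SimpleGraph V} {S : Set V} {a u v : V}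
    (h : AvoidReach G S a u) (hadj : G.Adj u v) (hv : v ∉ S) : AvoidReach G S a v := by
  refine h.trans ⟨1, fun i => if i = 0 then u else v, by simp, by simp, ?_, ?_⟩
  · intro i hi
    have : i = 0 := by omega
    simpa [this] using hadj
  · intro i hi
    match i with
    | 0 => simpa using h.not_mem
    | 1 => simpa using hv

/-- Two vertices reachable from `a` avoiding `S` are joined by a chain all of whose
vertices are reachable from `a` avoiding `S`. -/
lemma avoidReach_connect {G : SimpleGraph V} {S : Set V} {a u v : V}
    (hu : AvoidReach G S a u) (hv : AvoidReach G S a v) :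
    ∃ (m : ℕ) (g : ℕ → V), g 0 = u ∧ g m = v ∧ (∀ i, i < m → G.Adj (g i) (g (i + 1))) ∧
      (∀ i, i ≤ m → AvoidReach G S a (g i)) := by
  obtain ⟨ℓ₁, f₁, h10, h1l, h1adj, h1av⟩ := hu
  obtain ⟨ℓ₂, f₂, h20, h2l, h2adj, h2av⟩ := hv
  refine ⟨ℓ₁ + ℓ₂, fun i => if i < ℓ₁ then f₁ (ℓ₁ - i) else f₂ (i - ℓ₁), ?_, ?_, ?_, ?_⟩
  · by_cases h : 0 < ℓ₁
    · simp [h, h1l]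
    · have h0 : ℓ₁ = 0 := by omega
      simp [h0, h20, ← h10, ← h1l, h0]
  · have : ¬ (ℓ₁ + ℓ₂ < ℓ₁) := by omega
    simp [this, h2l]
  · intro i hi
    show G.Adj (if i < ℓ₁ then f₁ (ℓ₁ - i) else f₂ (i - ℓ₁)) (if i + 1 < ℓ₁ then f₁ (ℓ₁ - (i + 1)) else f₂ (i + 1 - ℓ₁))
    rcases lt_trichotomy (i + 1) ℓ₁ with h | h | h
    · rw [if_pos (show i < ℓ₁ by omega), if_pos h]
      have h1 : ℓ₁ - i = (ℓ₁ - (i + 1)) + 1 := by omega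
      rw [h1]
      exact (h1adj _ (by omega)).symm
    · rw [if_pos (show i < ℓ₁ by omega), if_neg (show ¬ (i + 1 < ℓ₁) by omega)]
      have e1 : ℓ₁ - i = 1 := by omega
      have e2 : f₂ (i + 1 - ℓ₁) = f₁ 0 := by
        rw [show i + 1 - ℓ₁ = 0 by omega, h20, h10]
      rw [e1, e2]
      exact (h1adj 0 (by omega)).symm
    · rw [if_neg (show ¬ (i < ℓ₁) by omega), if_neg (show ¬ (i + 1 < ℓ₁) by omega)]
      have e : i + 1 - ℓ₁ = (i - ℓ₁) + 1 := by omega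
      rw [e]
      exact h2adj _ (by omega)
  · intro i hi
    by_cases h : i < ℓ₁
    · simp only [h, if_pos]
      exact ⟨ℓ₁ - i, f₁, h10, rfl, fun j hj => h1adj j (by omega), fun j hj => h1av j (by omega)⟩
    · simp only [h, if_neg]
      exact ⟨i - ℓ₁, f₂, h20, rfl, fun j hj => h2adj j (by omega), fun j hj => h2av j (by omega)⟩


/-- A chain from `x` to `y` whose interior vertices lie in `C`. -/
def IsLink (G : SimpleGraph V) (C : Set V) (x y : V) (ℓ : ℕ) (f : ℕ → V) : Prop :=
  f 0 = x ∧ f ℓ = y ∧ (∀ i, i < ℓ → G.Adj (f i) (f (i + 1))) ∧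
    (∀ i, 0 < i → i < ℓ → f i ∈ C)

lemma link_of_chain {G : SimpleGraph V} {C : Set V} {x y u v : V} {m : ℕ} {g : ℕ → V}
    (hxu : G.Adj x u) (hyv : G.Adj y v) (hg0 : g 0 = u) (hgm : g m = v)
    (hadj : ∀ i, i < m → G.Adj (g i) (g (i + 1))) (hmem : ∀ i, i ≤ m → g i ∈ C) :
    ∃ ℓ f, IsLink G C x y ℓ f := by
  refine ⟨m + 2, fun i => if i = 0 then x else if i ≤ m + 1 then g (i - 1) else y,
    by simp, ?_, ?_, ?_⟩
  · have h1 : ¬ (m + 2 = 0) := by omega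
    have h2 : ¬ (m + 2 ≤ m + 1) := by omega
    simp [h1, h2]
  · intro i hi
    show G.Adj (if i = 0 then x else if i ≤ m + 1 then g (i - 1) else y)
      (if i + 1 = 0 then x else if i + 1 ≤ m + 1 then g (i + 1 - 1) else y)
    rcases Nat.eq_zero_or_pos i with h | h
    · subst h
      simp only [if_pos rfl, if_neg (show ¬ (0 + 1 = 0) by omega),
        if_pos (show 0 + 1 ≤ m + 1 by omega)]
      rw [show 0 + 1 - 1 = 0 by omega, hg0]
      exact hxu
    · rcases lt_trichotomy i (m + 1) with h2 | h2 | h2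
      · rw [if_neg (show ¬ (i = 0) by omega), if_pos (show i ≤ m + 1 by omega),
          if_neg (show ¬ (i + 1 = 0) by omega), if_pos (show i + 1 ≤ m + 1 by omega)]
        have e : i + 1 - 1 = (i - 1) + 1 := by omega
        rw [e]
        exact hadj (i - 1) (by omega)
      · rw [if_neg (show ¬ (i = 0) by omega), if_pos (show i ≤ m + 1 by omega),
          if_neg (show ¬ (i + 1 = 0) by omega), if_neg (show ¬ (i + 1 ≤ m + 1) by omega)]
        rw [show i - 1 = m by omega, hgm]
        exact hyv.symm
      · omega
  · intro i hi1 hi2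
    show (if i = 0 then x else if i ≤ m + 1 then g (i - 1) else y) ∈ C
    rw [if_neg (show ¬ (i = 0) by omega), if_pos (show i ≤ m + 1 by omega)]
    exact hmem (i - 1) (by omega)

lemma link_shortcut_adj {G : SimpleGraph V} {C : Set V} {x y : V} {ℓ : ℕ} {f : ℕ → V}
    (h : IsLink G C x y ℓ f) {i e : ℕ} (he : 2 ≤ e) (hie : i + e ≤ ℓ)
    (hadj : G.Adj (f i) (f (i + e))) : ∃ g, IsLink G C x y (ℓ - e + 1) g := by
  obtain ⟨h0, hl, hadjf, hmem⟩ := h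
  refine ⟨fun k => if k ≤ i then f k else f (k + (e - 1)), ?_, ?_, ?_, ?_⟩
  · simpa using h0
  · show (if ℓ - e + 1 ≤ i then f (ℓ - e + 1) else f (ℓ - e + 1 + (e - 1))) = y
    rw [if_neg (show ¬ (ℓ - e + 1 ≤ i) by omega), show ℓ - e + 1 + (e - 1) = ℓ by omega]
    exact hl
  · intro k hk
    show G.Adj (if k ≤ i then f k else f (k + (e - 1)))
      (if k + 1 ≤ i then f (k + 1) else f (k + 1 + (e - 1)))
    rcases lt_trichotomy k i with h1 | h1 | h1
    · rw [if_pos (show k ≤ i by omega), if_pos (show k + 1 ≤ i by omega)]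
      exact hadjf k (by omega)
    · subst h1
      rw [if_pos le_rfl, if_neg (show ¬ (k + 1 ≤ k) by omega),
        show k + 1 + (e - 1) = k + e by omega]
      exact hadj
    · rw [if_neg (show ¬ (k ≤ i) by omega), if_neg (show ¬ (k + 1 ≤ i) by omega),
        show k + 1 + (e - 1) = (k + (e - 1)) + 1 by omega]
      exact hadjf _ (by omega)
  · intro k hk1 hk2
    show (if k ≤ i then f k else f (k + (e - 1))) ∈ C
    by_cases h1 : k ≤ i
    · rw [if_pos h1]
      exact hmem k hk1 (by omega)
    · rw [if_neg h1]
      exact hmem _ (by omega) (by omega)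

lemma link_shortcut_eq {G : SimpleGraph V} {C : Set V} {x y : V} {ℓ : ℕ} {f : ℕ → V}
    (h : IsLink G C x y ℓ f) {i e : ℕ} (he : 1 ≤ e) (hie : i + e ≤ ℓ)
    (heq : f i = f (i + e)) : ∃ g, IsLink G C x y (ℓ - e) g := by
  obtain ⟨h0, hl, hadjf, hmem⟩ := h
  refine ⟨fun k => if k < i then f k else f (k + e), ?_, ?_, ?_, ?_⟩
  · by_cases h1 : 0 < i
    · simpa [h1] using h0
    · have : i = 0 := by omega
      subst this
      show (if 0 < 0 then f 0 else f (0 + e)) = x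
      rw [if_neg (by omega), show 0 + e = 0 + e from rfl]
      rw [show (0 : ℕ) + e = 0 + e from rfl]
      have : f (0 + e) = f 0 := heq.symm
      rw [this, h0]
  · show (if ℓ - e < i then f (ℓ - e) else f (ℓ - e + e)) = y
    rw [if_neg (show ¬ (ℓ - e < i) by omega), show ℓ - e + e = ℓ by omega]
    exact hl
  · intro k hk
    show G.Adj (if k < i then f k else f (k + e)) (if k + 1 < i then f (k + 1) else f (k + 1 + e))
    rcases lt_trichotomy (k + 1) i with h1 | h1 | h1
    · rw [if_pos (show k < i by omega), if_pos h1]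
      exact hadjf k (by omega)
    · rw [if_pos (show k < i by omega), if_neg (show ¬ (k + 1 < i) by omega)]
      have e2 : f (k + 1 + e) = f (k + 1) := by
        rw [show k + 1 + e = i + e by omega, ← heq, h1]
      rw [e2]
      exact hadjf k (by omega)
    · rw [if_neg (show ¬ (k < i) by omega), if_neg (show ¬ (k + 1 < i) by omega),
        show k + 1 + e = (k + e) + 1 by omega]
      exact hadjf _ (by omega)
  · intro k hk1 hk2
    show (if k < i then f k else f (k + e)) ∈ C
    by_cases h1 : k < i
    · rw [if_pos h1]
      exact hmem k hk1 (by omega)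
    · rw [if_neg h1]
      exact hmem _ (by omega) (by omega)

lemma exists_min_link {G : SimpleGraph V} {C : Set V} {x y : V}
    (hne : x ≠ y) (hnadj : ¬ G.Adj x y) (hex : ∃ ℓ f, IsLink G C x y ℓ f) :
    ∃ ℓ f, IsLink G C x y ℓ f ∧ 2 ≤ ℓ ∧
      (∀ i j, i < j → j ≤ ℓ → f i = f j → False) ∧
      (∀ i j, i < j → j ≤ ℓ → G.Adj (f i) (f j) → j = i + 1) := by
  classical
  obtain ⟨f, hf⟩ := Nat.find_spec hex
  set ℓ := Nat.find hex with hℓdef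
  have hmin : ∀ k, k < ℓ → ¬ ∃ f, IsLink G C x y k f := fun k hk => Nat.find_min hex hk
  have hℓ2 : 2 ≤ ℓ := by
    by_contra h2
    interval_cases ℓ
    · exact hne (hf.1.symm.trans hf.2.1)
    · exact hnadj (hf.1 ▸ hf.2.1 ▸ hf.2.2.1 0 (by omega))
  refine ⟨ℓ, f, hf, hℓ2, ?_, ?_⟩
  · intro i j hij hj heq
    have heq' : f i = f (i + (j - i)) := by rw [show i + (j - i) = j by omega]; exact heq
    obtain ⟨g, hg⟩ := link_shortcut_eq hf (by omega : 1 ≤ j - i) (by omega) heq'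
    exact hmin (ℓ - (j - i)) (by omega) ⟨g, hg⟩
  · intro i j hij hj hadj
    by_contra h2
    have hadj' : G.Adj (f i) (f (i + (j - i))) := by
      rw [show i + (j - i) = j by omega]; exact hadj
    obtain ⟨g, hg⟩ := link_shortcut_adj hf (by omega : 2 ≤ j - i) (by omega) hadj'
    exact hmin (ℓ - (j - i) + 1) (by omega) ⟨g, hg⟩

lemma no_two_links {G : SimpleGraph V} (hch : Chordal G) {x y : V} {A B : Set V}
    (hne : x ≠ y) (hnadj : ¬ G.Adj x y)
    (hAB : ∀ u, u ∈ A → ∀ v, v ∈ B → u ≠ v ∧ ¬ G.Adj u v)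
    (hxB : x ∉ B) (hyB : y ∉ B)
    (hA : ∃ ℓ f, IsLink G A x y ℓ f) (hB : ∃ ℓ g, IsLink G B x y ℓ g) : False := by
  classical
  obtain ⟨ℓA, f, hf, hℓA, hfinj, hfch⟩ := exists_min_link hne hnadj hA
  obtain ⟨ℓB, g, hg, hℓB, hginj, hgch⟩ := exists_min_link hne hnadj hB
  obtain ⟨hf0, hfl, hfadj, hfmem⟩ := hf
  obtain ⟨hg0, hgl, hgadj, hgmem⟩ := hg
  set n := ℓA + ℓB with hn
  have hn4 : 4 ≤ n := by omega
  set F : ℕ → V := fun k => if k ≤ ℓA then f k else g (n - k) with hF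
  have hFle : ∀ k, k ≤ ℓA → F k = f k := by
    intro k hk; rw [hF]; simp only []; rw [if_pos hk]
  have hFgt : ∀ k, ℓA < k → F k = g (n - k) := by
    intro k hk; rw [hF]; simp only []; rw [if_neg (by omega)]
  -- injectivity
  have hFinj : ∀ i j, i ≤ j → j < n → F i = F j → i = j := by
    intro i j hij hj heq
    by_cases h1 : j ≤ ℓA
    · by_contra hne2
      rw [hFle i (by omega), hFle j h1] at heq
      exact hfinj i j (by omega) h1 heq
    · by_cases h2 : i ≤ ℓA
      · exfalso
        have hjB : g (n - j) ∈ B := hgmem (n - j) (by omega) (by omega)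
        rw [hFle i h2, hFgt j (by omega)] at heq
        rcases Nat.eq_zero_or_pos i with h3 | h3
        · subst h3; rw [hf0] at heq; exact hxB (heq ▸ hjB)
        · by_cases h4 : i = ℓA
          · rw [h4, hfl] at heq; exact hyB (heq ▸ hjB)
          · exact (hAB _ (hfmem i h3 (by omega)) _ hjB).1 heq
      · by_contra hne2
        rw [hFgt i (by omega), hFgt j (by omega)] at heq
        exact hginj (n - j) (n - i) (by omega) (by omega) heq.symm
  -- consecutive adjacency
  have hFadj : ∀ i, i + 1 < n → G.Adj (F i) (F (i + 1)) := by
    intro i hi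
    by_cases h1 : i + 1 ≤ ℓA
    · rw [hFle i (by omega), hFle (i + 1) h1]
      exact hfadj i (by omega)
    · by_cases h2 : i = ℓA
      · subst h2
        rw [hFle i le_rfl, hfl, hFgt (i + 1) (by omega)]
        have := hgadj (n - (i + 1)) (by omega)
        rw [show n - (i + 1) + 1 = ℓB by omega] at this
        rw [← hgl]
        exact this.symm
      · rw [hFgt i (by omega), hFgt (i + 1) (by omega)]
        have := hgadj (n - (i + 1)) (by omega)
        rw [show n - (i + 1) + 1 = n - i by omega] at this
        exact this.symm
  have hFwrap : G.Adj (F (n - 1)) (F 0) := by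
    rw [hFgt (n - 1) (by omega), hFle 0 (by omega), hf0, ← hg0,
      show n - (n - 1) = 1 by omega]
    exact (hgadj 0 (by omega)).symm
  -- chord-freeness
  have hFch : ∀ i j, i < j → j < n → G.Adj (F i) (F j) → j = i + 1 ∨ (i = 0 ∧ j = n - 1) := by
    intro i j hij hj hadj
    by_cases h1 : j ≤ ℓA
    · left
      rw [hFle i (by omega), hFle j h1] at hadj
      exact hfch i j hij h1 hadj
    · by_cases h2 : ℓA ≤ i
      · left
        by_cases h3 : i = ℓA
        · subst h3
          rw [hFle i le_rfl, hfl, ← hgl, hFgt j (by omega)] at hadj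
          have := hgch (n - j) ℓB (by omega) le_rfl hadj.symm
          omega
        · rw [hFgt i (by omega), hFgt j (by omega)] at hadj
          have := hgch (n - j) (n - i) (by omega) (by omega) hadj.symm
          omega
      · have hjB : g (n - j) ∈ B := hgmem _ (by omega) (by omega)
        rcases Nat.eq_zero_or_pos i with h3 | h3
        · right
          subst h3
          rw [hFle 0 (by omega), hf0, ← hg0, hFgt j (by omega)] at hadj
          have := hgch 0 (n - j) (by omega) (by omega) hadj
          omega
        · exfalso
          have hiA : f i ∈ A := hfmem i h3 (by omega)
          rw [hFle i (by omega), hFgt j (by omega)] at hadj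
          exact (hAB _ hiA _ hjB).2 hadj
  -- build the embedding
  have hsub : ∀ u v : Fin n, (u - v).val = (n - v.val + u.val) % n := by
    intro u v; rw [Fin.sub_def]
  refine (hch n hn4).false ⟨⟨fun u => F u.val, ?_⟩, ?_⟩
  · intro u v huv
    rcases le_total u.val v.val with h | h
    · exact Fin.ext (hFinj _ _ h v.isLt huv)
    · exact Fin.ext (hFinj _ _ h u.isLt huv.symm).symm
  · intro u v
    show G.Adj (F u.val) (F v.val) ↔ (cycleGraph n).Adj u v
    rw [cycleGraph_adj']
    constructor
    · intro hadj
      rcases lt_trichotomy u.val v.val with h | h | h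
      · rcases hFch u.val v.val h v.isLt hadj with h2 | h2
        · right
          rw [hsub, show n - u.val + v.val = n + 1 by omega, Nat.add_mod_left]
          exact Nat.mod_eq_of_lt (by omega)
        · left
          rw [hsub, show n - v.val + u.val = 1 by omega]
          exact Nat.mod_eq_of_lt (by omega)
      · exfalso
        rw [show (u : ℕ) = (v : ℕ) from h] at hadj
        exact G.loopless.irrefl _ hadj
      · rcases hFch v.val u.val h u.isLt hadj.symm with h2 | h2
        · left
          rw [hsub, show n - v.val + u.val = n + 1 by omega, Nat.add_mod_left]
          exact Nat.mod_eq_of_lt (by omega)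
        · right
          rw [hsub, show n - u.val + v.val = 1 by omega]
          exact Nat.mod_eq_of_lt (by omega)
    · intro hcyc
      have hval : u.val = v.val + 1 ∨ v.val = u.val + 1 ∨
          (u.val = 0 ∧ v.val = n - 1) ∨ (v.val = 0 ∧ u.val = n - 1) := by
        rcases hcyc with h | h
        · rw [hsub] at h
          rcases Nat.lt_or_ge (n - v.val + u.val) n with hlt | hge
          · rw [Nat.mod_eq_of_lt hlt] at h
            omega
          · rw [Nat.mod_eq_sub_mod hge, Nat.mod_eq_of_lt (by omega)] at h
            omega
        · rw [hsub] at h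
          rcases Nat.lt_or_ge (n - u.val + v.val) n with hlt | hge
          · rw [Nat.mod_eq_of_lt hlt] at h
            omega
          · rw [Nat.mod_eq_sub_mod hge, Nat.mod_eq_of_lt (by omega)] at h
            omega
      rcases hval with h | h | ⟨h1, h2⟩ | ⟨h1, h2⟩
      · rw [show u.val = v.val + 1 from h]
        exact (hFadj v.val (by omega)).symm
      · rw [show v.val = u.val + 1 from h]
        exact hFadj u.val (by omega)
      · rw [h1, h2]
        exact hFwrap.symm
      · rw [h1, h2]
        exact hFwrap

theorem diracAux : ∀ (N : ℕ) (W : Type u) [Fintype W] (G : SimpleGraph W),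
    Fintype.card W ≤ N → Chordal G →
    G = ⊤ ∨ ∃ x y : W, x ≠ y ∧ ¬ G.Adj x y ∧ Simplicial G x ∧ Simplicial G y := by
  intro N
  induction N with
  | zero =>
    intro W _ G hcard _
    left
    have : IsEmpty W := by
      rw [← Fintype.card_eq_zero_iff]
      omega
    ext u v
    exact isEmptyElim u
  | succ N ih =>
    intro W _ G hcard hch
    classical
    by_cases hcomp : ∀ x y : W, x ≠ y → G.Adj x y
    · left
      ext u v
      simp only [top_adj]
      exact ⟨fun h => G.ne_of_adj h, fun h => hcomp u v h⟩
    push_neg at hcomp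
    obtain ⟨a, b, hab, hnadj⟩ := hcomp
    set Sep : Finset W → Prop := fun T => a ∉ T ∧ b ∉ T ∧ ¬ AvoidReach G (↑T) a b with hSepDef
    have h0 : Sep (Finset.univ \ {a, b}) := by
      refine ⟨by simp, by simp, ?_⟩
      rintro ⟨ℓ, f, hf0, hfl, hfadj, hfav⟩
      have hℓ : ℓ ≠ 0 := by
        rintro rfl
        exact hab (hf0.symm.trans hfl)
      have h1 := hfav 1 (by omega)
      have h1' : f 1 = a ∨ f 1 = b := by
        by_contra hc
        push_neg at hc
        exact h1 (by simp [hc.1, hc.2])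
      have hadj0 := hfadj 0 (by omega)
      rw [hf0] at hadj0
      rcases h1' with h | h
      · rw [h] at hadj0; exact G.loopless.irrefl a hadj0
      · rw [h] at hadj0; exact hnadj hadj0
    obtain ⟨S, hSsep, hSmin⟩ : ∃ S : Finset W, Sep S ∧ ∀ T, Sep T → S.card ≤ T.card := by
      have hne' : {k | ∃ T : Finset W, Sep T ∧ T.card = k}.Nonempty := ⟨_, _, h0, rfl⟩
      obtain ⟨S, hS1, hS2⟩ := Nat.sInf_mem hne'
      exact ⟨S, hS1, fun T hT => hS2 ▸ Nat.sInf_le ⟨T, hT, rfl⟩⟩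
    obtain ⟨haS, hbS, hreach⟩ := hSsep
    have haS' : a ∉ (↑S : Set W) := by simpa using haS
    have hbS' : b ∉ (↑S : Set W) := by simpa using hbS
    set A : Set W := {v | AvoidReach G (↑S) a v} with hAdef
    set B : Set W := {v | AvoidReach G (↑S) b v} with hBdef
    have haA : a ∈ A := avoidReach_refl haS'
    have hbB : b ∈ B := avoidReach_refl hbS'
    have hdisj : ∀ v, v ∈ A → v ∈ B → False := fun v hva hvb =>
      hreach (AvoidReach.trans hva (AvoidReach.symm hvb))
    have hAnS : ∀ v, v ∈ A → v ∉ (↑S : Set W) := fun v hv => AvoidReach.not_mem hv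
    have hBnS : ∀ v, v ∈ B → v ∉ (↑S : Set W) := fun v hv => AvoidReach.not_mem hv
    have hclA : ∀ u, u ∈ A → ∀ v, G.Adj u v → v ∉ (↑S : Set W) → v ∈ A :=
      fun u hu v hadj hv => AvoidReach.step hu hadj hv
    have hclB : ∀ u, u ∈ B → ∀ v, G.Adj u v → v ∉ (↑S : Set W) → v ∈ B :=
      fun u hu v hadj hv => AvoidReach.step hu hadj hv
    have hnedge : ∀ u, u ∈ A → ∀ v, v ∈ B → ¬ G.Adj u v := fun u hu v hv hadj =>
      hdisj v (hclA u hu v hadj (hBnS v hv)) hv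
    have hABsep : ∀ u, u ∈ A → ∀ v, v ∈ B → u ≠ v ∧ ¬ G.Adj u v := fun u hu v hv =>
      ⟨fun h => hdisj v (h ▸ hu) hv, hnedge u hu v hv⟩
    have hconn : ∀ s ∈ S, AvoidReach G ↑(S.erase s) a b := by
      intro s hs
      by_contra hcon
      have hsep : Sep (S.erase s) :=
        ⟨fun h => haS (Finset.mem_of_mem_erase h), fun h => hbS (Finset.mem_of_mem_erase h), hcon⟩
      exact absurd (hSmin _ hsep) (not_le.2 (Finset.card_erase_lt_of_mem hs))
    have hfind : ∀ (r : W), r ∉ (↑S : Set W) → ∀ s ∈ S, ∀ (t : W),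
        AvoidReach G ↑(S.erase s) r t → ¬ AvoidReach G (↑S) r t →
        ∃ u, AvoidReach G (↑S) r u ∧ G.Adj u s := by
      intro r hrS s hs t hre hnr
      obtain ⟨ℓ, f, hf0, hfl, hfadj, hfav⟩ := hre
      have hex : ∃ i, i ≤ ℓ ∧ f i ∈ (↑S : Set W) := by
        by_contra hno
        push_neg at hno
        exact hnr ⟨ℓ, f, hf0, hfl, hfadj, fun i hi => hno i hi⟩
      obtain ⟨hi₀ℓ, hi₀S⟩ := Nat.find_spec hex
      set i₀ := Nat.find hex with hi₀def
      have hmin' : ∀ j, j < i₀ → f j ∉ (↑S : Set W) := by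
        intro j hj hmem
        exact Nat.find_min hex hj ⟨by omega, hmem⟩
      have hfi₀ : f i₀ = s := by
        have h1 := hfav i₀ hi₀ℓ
        by_contra h2
        exact h1 (Finset.mem_coe.2 (Finset.mem_erase.2 ⟨h2, by simpa using hi₀S⟩))
      have hi₀0 : i₀ ≠ 0 := by
        intro h
        rw [h, hf0] at hi₀S
        exact hrS hi₀S
      refine ⟨f (i₀ - 1), ⟨i₀ - 1, f, hf0, rfl, fun i hi => hfadj i (by omega),
        fun i hi => hmin' i (by omega)⟩, ?_⟩
      have := hfadj (i₀ - 1) (by omega)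
      rw [show i₀ - 1 + 1 = i₀ by omega, hfi₀] at this
      exact this
    have hclique : ∀ u ∈ S, ∀ w ∈ S, u ≠ w → G.Adj u w := by
      intro u hu w hw huw
      by_contra hnuw
      obtain ⟨ua, huaA, hua⟩ := hfind a haS' u hu b (hconn u hu) hreach
      obtain ⟨wa, hwaA, hwa⟩ := hfind a haS' w hw b (hconn w hw) hreach
      obtain ⟨ub, hubB, hub⟩ := hfind b hbS' u hu a (AvoidReach.symm (hconn u hu))
        (fun h => hreach (AvoidReach.symm h))
      obtain ⟨wb, hwbB, hwb⟩ := hfind b hbS' w hw a (AvoidReach.symm (hconn w hw))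
        (fun h => hreach (AvoidReach.symm h))
      obtain ⟨m1, g1, hg10, hg1m, hg1adj, hg1mem⟩ := avoidReach_connect huaA hwaA
      obtain ⟨m2, g2, hg20, hg2m, hg2adj, hg2mem⟩ := avoidReach_connect hubB hwbB
      have hlinkA : ∃ ℓ f, IsLink G A u w ℓ f :=
        link_of_chain hua.symm hwa.symm hg10 hg1m hg1adj (fun i hi => hg1mem i hi)
      have hlinkB : ∃ ℓ f, IsLink G B u w ℓ f :=
        link_of_chain hub.symm hwb.symm hg20 hg2m hg2adj (fun i hi => hg2mem i hi)
      exact no_two_links hch huw hnuw hABsep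
        (fun h => hBnS u h (Finset.mem_coe.2 hu)) (fun h => hBnS w h (Finset.mem_coe.2 hw))
        hlinkA hlinkB
    -- Side A
    have sideA : ∃ u : W, u ∈ A ∧ Simplicial G u := by
      set s₁ : Set W := A ∪ ↑S with hs₁def
      have hb1 : b ∉ s₁ := by
        rintro (h | h)
        · exact hdisj b h hbB
        · exact hbS' h
      have hcard1 : Fintype.card ↥s₁ ≤ N := by
        have hlt : Fintype.card ↥s₁ < Fintype.card W := by
          refine Fintype.card_lt_of_injective_of_notMem (Subtype.val) Subtype.val_injective
            (b := b) ?_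
          rw [Subtype.range_coe]
          exact hb1
        omega
      set G₁ := G.induce s₁ with hG₁def
      have hch1 : Chordal G₁ := fun k hk =>
        ⟨fun e => (hch k hk).false ((Embedding.induce s₁).comp e)⟩
      have hgetA : ∃ u : ↥s₁, ↑u ∈ A ∧ Simplicial G₁ u := by
        rcases ih ↥s₁ G₁ hcard1 hch1 with htop | ⟨u, v, huv, hnuv, hsu, hsv⟩
        · refine ⟨⟨a, Set.mem_union_left _ haA⟩, haA, ?_⟩
          intro p _ q _ hpq
          rw [htop]
          simp only [top_adj]
          exact hpq
        · by_cases h : ↑u ∈ A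
          · exact ⟨u, h, hsu⟩
          · by_cases h2 : ↑v ∈ A
            · exact ⟨v, h2, hsv⟩
            · exfalso
              have hu' : ↑u ∈ (↑S : Set W) := ((Set.mem_union _ _ _).1 u.2).resolve_left h
              have hv' : ↑v ∈ (↑S : Set W) := ((Set.mem_union _ _ _).1 v.2).resolve_left h2
              have : G.Adj ↑u ↑v := hclique _ (Finset.mem_coe.1 hu') _ (Finset.mem_coe.1 hv')
                (fun hc => huv (Subtype.ext hc))
              exact hnuv this
      obtain ⟨uA, huA, hsimpA⟩ := hgetA
      refine ⟨↑uA, huA, ?_⟩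
      intro p hp q hq hpq
      have hp' : G.Adj (↑uA) p := hp
      have hq' : G.Adj (↑uA) q := hq
      have hpm : p ∈ s₁ := by
        by_cases h : p ∈ (↑S : Set W)
        · exact Set.mem_union_right _ h
        · exact Set.mem_union_left _ (hclA _ huA _ hp' h)
      have hqm : q ∈ s₁ := by
        by_cases h : q ∈ (↑S : Set W)
        · exact Set.mem_union_right _ h
        · exact Set.mem_union_left _ (hclA _ huA _ hq' h)
      exact hsimpA (show (⟨p, hpm⟩ : ↥s₁) ∈ G₁.neighborSet uA from hp')
        (show (⟨q, hqm⟩ : ↥s₁) ∈ G₁.neighborSet uA from hq')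
        (fun hc => hpq (congrArg Subtype.val hc))
    -- Side B
    have sideB : ∃ u : W, u ∈ B ∧ Simplicial G u := by
      set s₂ : Set W := B ∪ ↑S with hs₂def
      have ha2 : a ∉ s₂ := by
        rintro (h | h)
        · exact hdisj a haA h
        · exact haS' h
      have hcard2 : Fintype.card ↥s₂ ≤ N := by
        have hlt : Fintype.card ↥s₂ < Fintype.card W := by
          refine Fintype.card_lt_of_injective_of_notMem (Subtype.val) Subtype.val_injective
            (b := a) ?_
          rw [Subtype.range_coe]
          exact ha2
        omega
      set G₂ := G.induce s₂ with hG₂def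
      have hch2 : Chordal G₂ := fun k hk =>
        ⟨fun e => (hch k hk).false ((Embedding.induce s₂).comp e)⟩
      have hgetB : ∃ u : ↥s₂, ↑u ∈ B ∧ Simplicial G₂ u := by
        rcases ih ↥s₂ G₂ hcard2 hch2 with htop | ⟨u, v, huv, hnuv, hsu, hsv⟩
        · refine ⟨⟨b, Set.mem_union_left _ hbB⟩, hbB, ?_⟩
          intro p _ q _ hpq
          rw [htop]
          simp only [top_adj]
          exact hpq
        · by_cases h : ↑u ∈ B
          · exact ⟨u, h, hsu⟩
          · by_cases h2 : ↑v ∈ B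
            · exact ⟨v, h2, hsv⟩
            · exfalso
              have hu' : ↑u ∈ (↑S : Set W) := ((Set.mem_union _ _ _).1 u.2).resolve_left h
              have hv' : ↑v ∈ (↑S : Set W) := ((Set.mem_union _ _ _).1 v.2).resolve_left h2
              have : G.Adj ↑u ↑v := hclique _ (Finset.mem_coe.1 hu') _ (Finset.mem_coe.1 hv')
                (fun hc => huv (Subtype.ext hc))
              exact hnuv this
      obtain ⟨uB, huB, hsimpB⟩ := hgetB
      refine ⟨↑uB, huB, ?_⟩
      intro p hp q hq hpq
      have hp' : G.Adj (↑uB) p := hp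
      have hq' : G.Adj (↑uB) q := hq
      have hpm : p ∈ s₂ := by
        by_cases h : p ∈ (↑S : Set W)
        · exact Set.mem_union_right _ h
        · exact Set.mem_union_left _ (hclB _ huB _ hp' h)
      have hqm : q ∈ s₂ := by
        by_cases h : q ∈ (↑S : Set W)
        · exact Set.mem_union_right _ h
        · exact Set.mem_union_left _ (hclB _ huB _ hq' h)
      exact hsimpB (show (⟨p, hpm⟩ : ↥s₂) ∈ G₂.neighborSet uB from hp')
        (show (⟨q, hqm⟩ : ↥s₂) ∈ G₂.neighborSet uB from hq')
        (fun hc => hpq (congrArg Subtype.val hc))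
    obtain ⟨xA, hxA, hsA⟩ := sideA
    obtain ⟨xB, hxB, hsB⟩ := sideB
    right
    refine ⟨xA, xB, ?_, ?_, hsA, hsB⟩
    · intro h
      exact hdisj _ (h ▸ hxA) hxB
    · exact hnedge _ hxA _ hxB


end DiracAux

/-- Dirac: a chordal graph is complete or has two non-adjacent simplicial
vertices. -/
theorem stmt1 [Fintype V] (G : SimpleGraph V) (h : Chordal G) :
    G = ⊤ ∨ ∃ x y : V, x ≠ y ∧ ¬ G.Adj x y ∧ Simplicial G x ∧ Simplicial G y :=
  diracAux (Fintype.card V) V G le_rfl h
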